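/- Let μ be a probability measure on ℝ of the form μ = p δ_{x₁} + q δ_{x₂} + ρ with |x₁ - (-1)| ≤ δ, |x₂ - 1| ≤ δ, ρ supported in [-δ, δ], r = ρ(ℝ), and suppose p, q ∈ [1/2 - 2δ, 1/2 + δ/2] and r ≤ 4δ for some δ ∈ (0, 1/8). Then the Lévy distance between μ and b = (1/2)δ_{-1} + (1/2)δ_1 is at most 2δ. -/

import Mathlib

open MeasureTheory ProbabilityTheory Set
open scoped ENNReal

/-- The Lévy distance between two probability measures on ℝ, defined via their
cumulative distribution functions. -/
noncomputable def levyDist (μ ν : Measure ℝ) : ℝ :=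
  sInf {ε : ℝ | 0 < ε ∧ ∀ x : ℝ,
    cdf μ (x - ε) - ε ≤ cdf ν x ∧ cdf ν x ≤ cdf μ (x + ε) + ε}

/-- The symmetric Bernoulli distribution `b = (1/2)δ₋₁ + (1/2)δ₁`. -/
noncomputable def bern : Measure ℝ :=
  (2 : ℝ≥0∞)⁻¹ • Measure.dirac (-1) + (2 : ℝ≥0∞)⁻¹ • Measure.dirac 1

instance : IsProbabilityMeasure bern := by
  constructor
  simp [bern, Measure.add_apply, Measure.smul_apply, smul_eq_mul]
  rw [ENNReal.inv_two_add_inv_two]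

lemma bern_cdf_of_lt {x : ℝ} (hx : x < -1) : cdf bern x = 0 := by
  rw [cdf_eq_real, measureReal_def]
  have h : bern (Iic x) = 0 := by
    simp [bern, Measure.add_apply, Measure.smul_apply, smul_eq_mul,
      Measure.dirac_apply' _ measurableSet_Iic,
      indicator_of_notMem (show (-1 : ℝ) ∉ Iic x by simpa using hx),
      indicator_of_notMem (show (1 : ℝ) ∉ Iic x by simp; linarith)]
  rw [h]; simp

lemma bern_cdf_of_mid {x : ℝ} (hx1 : -1 ≤ x) (hx2 : x < 1) : cdf bern x = 1 / 2 := by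
  rw [cdf_eq_real, measureReal_def]
  have h : bern (Iic x) = 2⁻¹ := by
    simp [bern, Measure.add_apply, Measure.smul_apply, smul_eq_mul,
      Measure.dirac_apply' _ measurableSet_Iic,
      indicator_of_mem (show (-1 : ℝ) ∈ Iic x by simpa using hx1),
      indicator_of_notMem (show (1 : ℝ) ∉ Iic x by simpa using hx2)]
  rw [h]
  norm_num [ENNReal.toReal_inv]

lemma bern_cdf_of_ge {x : ℝ} (hx : 1 ≤ x) : cdf bern x = 1 := by
  rw [cdf_eq_real, measureReal_def]
  have h : bern (Iic x) = 1 := by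
    simp [bern, Measure.add_apply, Measure.smul_apply, smul_eq_mul,
      Measure.dirac_apply' _ measurableSet_Iic,
      indicator_of_mem (show (-1 : ℝ) ∈ Iic x by simp; linarith),
      indicator_of_mem (show (1 : ℝ) ∈ Iic x by simpa using hx)]
    rw [ENNReal.inv_two_add_inv_two]
  rw [h]; simp

theorem levy_dist_le_two_delta (μ ρ : Measure ℝ) [IsProbabilityMeasure μ]
    (δ : ℝ) (p q r x₁ x₂ : ℝ)
    (hδ : δ ∈ Ioo (0 : ℝ) (1 / 8))
    (hx1 : |x₁ - (-1)| ≤ δ) (hx2 : |x₂ - 1| ≤ δ)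
    (hρ : ρ (Icc (-δ) δ)ᶜ = 0)
    (hdecomp : μ = ENNReal.ofReal p • Measure.dirac x₁
        + ENNReal.ofReal q • Measure.dirac x₂ + ρ)
    (hr : r = (ρ univ).toReal)
    (hp : p ∈ Icc (1 / 2 - 2 * δ) (1 / 2 + δ / 2))
    (hq : q ∈ Icc (1 / 2 - 2 * δ) (1 / 2 + δ / 2))
    (hr4 : r ≤ 4 * δ) :
    levyDist μ bern ≤ 2 * δ := by
  obtain ⟨hδ0, hδ8⟩ := hδ
  have hp0 : 0 ≤ p := by nlinarith [hp.1]
  have hq0 : 0 ≤ q := by nlinarith [hq.1]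
  have hr0 : 0 ≤ r := hr ▸ ENNReal.toReal_nonneg
  rw [abs_le] at hx1 hx2
  have hx1l : -1 - δ ≤ x₁ := by linarith [hx1.1]
  have hx1u : x₁ ≤ -1 + δ := by linarith [hx1.2]
  have hx2l : 1 - δ ≤ x₂ := by linarith [hx2.1]
  have hx2u : x₂ ≤ 1 + δ := by linarith [hx2.2]
  -- total mass identity
  have hsum : ENNReal.ofReal p + ENNReal.ofReal q + ρ univ = 1 := by
    have h := measure_univ (μ := μ)
    rw [hdecomp] at h
    simpa [Measure.add_apply, Measure.smul_apply, smul_eq_mul] using h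
  have hρtop : ρ univ ≠ ⊤ := by
    intro h
    rw [h] at hsum
    simp at hsum
  have hρr : ρ univ = ENNReal.ofReal r := by
    rw [hr, ENNReal.ofReal_toReal hρtop]
  have hpqr : p + q + r = 1 := by
    have h := congrArg ENNReal.toReal hsum
    rw [ENNReal.toReal_add (by simp [ENNReal.add_ne_top]) hρtop,
      ENNReal.toReal_add (by simp) (by simp),
      ENNReal.toReal_ofReal hp0, ENNReal.toReal_ofReal hq0] at h
    simpa [hr] using h
  -- CDF lower bound when x₁ ≤ y
  have hlow : ∀ y : ℝ, x₁ ≤ y → p ≤ cdf μ y := by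
    intro y hy
    rw [cdf_eq_real, measureReal_def]
    have h1 : ENNReal.ofReal p ≤ μ (Iic y) := by
      rw [hdecomp]
      calc ENNReal.ofReal p = ENNReal.ofReal p * Measure.dirac x₁ (Iic y) := by
            rw [Measure.dirac_apply_of_mem (show x₁ ∈ Iic y from hy), mul_one]
        _ ≤ _ := by
            simp only [Measure.add_apply, Measure.smul_apply, smul_eq_mul]
            exact le_add_of_le_of_nonneg (le_add_of_le_of_nonneg le_rfl zero_le) zero_le
    calc p = (ENNReal.ofReal p).toReal := by rw [ENNReal.toReal_ofReal hp0]
      _ ≤ (μ (Iic y)).toReal := ENNReal.toReal_mono (measure_ne_top μ _) h1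
  -- CDF zero when y below everything
  have hzero : ∀ y : ℝ, y < x₁ → y < x₂ → y < -δ → cdf μ y = 0 := by
    intro y h1 h2 h3
    rw [cdf_eq_real, measureReal_def]
    have hρ0 : ρ (Iic y) = 0 := by
      refine measure_mono_null (fun z hz => ?_) hρ
      simp only [mem_compl_iff, mem_Icc, not_and_or, not_le]
      left
      exact lt_of_le_of_lt hz h3
    have hd1 : Measure.dirac x₁ (Iic y) = 0 := by
      rw [Measure.dirac_apply' _ measurableSet_Iic,
        indicator_of_notMem (show x₁ ∉ Iic y by simpa using h1)]
    have hd2 : Measure.dirac x₂ (Iic y) = 0 := by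
      rw [Measure.dirac_apply' _ measurableSet_Iic,
        indicator_of_notMem (show x₂ ∉ Iic y by simpa using h2)]
    have h : μ (Iic y) = 0 := by
      rw [hdecomp]
      simp [Measure.add_apply, Measure.smul_apply, smul_eq_mul, hd1, hd2, hρ0]
    rw [h]; simp
  -- CDF upper bound when y < x₂
  have hupper : ∀ y : ℝ, y < x₂ → cdf μ y ≤ p + r := by
    intro y hy
    rw [cdf_eq_real, measureReal_def]
    have h : μ (Iic y) ≤ ENNReal.ofReal (p + r) := by
      rw [ENNReal.ofReal_add hp0 hr0, ← hρr, hdecomp]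
      simp only [Measure.add_apply, Measure.smul_apply, smul_eq_mul]
      have hd2 : Measure.dirac x₂ (Iic y) = 0 := by
        rw [Measure.dirac_apply' _ measurableSet_Iic,
          indicator_of_notMem (show x₂ ∉ Iic y by simpa using hy)]
      rw [hd2, mul_zero, add_zero]
      refine add_le_add ?_ (measure_mono (subset_univ _))
      calc ENNReal.ofReal p * Measure.dirac x₁ (Iic y) ≤ ENNReal.ofReal p * 1 :=
            mul_le_mul_right prob_le_one _
        _ = ENNReal.ofReal p := mul_one _
    exact ENNReal.toReal_le_of_le_ofReal (by linarith) h
  -- CDF equals one when y above everything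
  have hfull : ∀ y : ℝ, x₁ ≤ y → x₂ ≤ y → δ ≤ y → cdf μ y = 1 := by
    intro y h1 h2 h3
    rw [cdf_eq_real, measureReal_def]
    have hρ0 : ρ (Ioi y) = 0 := by
      refine measure_mono_null (fun z hz => ?_) hρ
      simp only [mem_compl_iff, mem_Icc, not_and_or, not_le]
      right
      exact lt_of_le_of_lt h3 hz
    have hd1 : Measure.dirac x₁ (Ioi y) = 0 := by
      rw [Measure.dirac_apply' _ measurableSet_Ioi,
        indicator_of_notMem (show x₁ ∉ Ioi y by simpa using h1)]
    have hd2 : Measure.dirac x₂ (Ioi y) = 0 := by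
      rw [Measure.dirac_apply' _ measurableSet_Ioi,
        indicator_of_notMem (show x₂ ∉ Ioi y by simpa using h2)]
    have h0 : μ (Ioi y) = 0 := by
      rw [hdecomp]
      simp [Measure.add_apply, Measure.smul_apply, smul_eq_mul, hd1, hd2, hρ0]
    have h : μ (Iic y) = 1 := by
      have hc := measure_compl (μ := μ) (s := Ioi y) measurableSet_Ioi (measure_ne_top μ _)
      rw [compl_Ioi, h0, measure_univ] at hc
      simpa using hc
    rw [h]; simp
  -- main argument
  have hmem : (2 * δ) ∈ {ε : ℝ | 0 < ε ∧ ∀ x : ℝ,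
      cdf μ (x - ε) - ε ≤ cdf bern x ∧ cdf bern x ≤ cdf μ (x + ε) + ε} := by
    refine ⟨by linarith, fun x => ?_⟩
    rcases lt_or_ge x (-1) with hxA | hxA
    · rw [bern_cdf_of_lt hxA]
      constructor
      · rw [hzero (x - 2 * δ) (by linarith) (by linarith) (by linarith)]
        linarith
      · have := cdf_nonneg (μ := μ) (x + 2 * δ)
        linarith
    · rcases lt_or_ge x 1 with hxB | hxB
      · rw [bern_cdf_of_mid hxA hxB]
        constructor
        · have := hupper (x - 2 * δ) (by linarith)
          have hq1 := hq.1
          linarith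
        · have := hlow (x + 2 * δ) (by linarith)
          have hp1 := hp.1
          linarith
      · rw [bern_cdf_of_ge hxB]
        constructor
        · have := cdf_le_one (μ := μ) (x - 2 * δ)
          linarith
        · rw [hfull (x + 2 * δ) (by linarith) (by linarith) (by linarith)]
          linarith
  exact csInf_le ⟨0, fun ε hε => le_of_lt hε.1⟩ hmem
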